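/- Let q = 2^n with n ≥ 2, F = GF(q), and ω a primitive (q−1)-th root of unity in F. Let A be the 3×(q−1) matrix with (r,c) entry ω^(r·c), and B = (I₃ | A). Then B generates an MDS [q+2, 3] code over F: every 3×3 column-submatrix of B is invertible. -/

import Mathlib

set_option maxHeartbeats 1000000 in
theorem stmt10 (n : ℕ) (hn : 2 ≤ n) (ω : GaloisField 2 n)
    (hω : IsPrimitiveRoot ω (2 ^ n - 1)) :
    ∀ c : Fin 3 → (Fin 3 ⊕ Fin (2 ^ n - 1)), Function.Injective c →
      Matrix.det
        ((Matrix.fromCols (1 : Matrix (Fin 3) (Fin 3) (GaloisField 2 n))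
            (Matrix.of fun (a : Fin 3) (b : Fin (2 ^ n - 1)) =>
              ω ^ ((a : ℕ) * (b : ℕ)))).submatrix id c) ≠ 0 := by
  intro c hc
  have h2 : (2 : GaloisField 2 n) = 0 := by
    have := CharP.cast_eq_zero (GaloisField 2 n) 2; exact_mod_cast this
  have hq : 4 ≤ 2 ^ n := by
    calc (4:ℕ) = 2 ^ 2 := rfl
    _ ≤ 2 ^ n := Nat.pow_le_pow_right (by norm_num) hn
  have hω0 : ω ≠ 0 := hω.ne_zero (by omega)
  have hinj : ∀ b₁ b₂ : Fin (2 ^ n - 1), b₁ ≠ b₂ → ω ^ (b₁ : ℕ) ≠ ω ^ (b₂ : ℕ) := by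
    intro b₁ b₂ hne h
    exact hne (Fin.ext (hω.pow_inj b₁.isLt b₂.isLt h))
  have hxy : c 0 ≠ c 1 := fun h => absurd (hc h) (by decide)
  have hxz : c 0 ≠ c 2 := fun h => absurd (hc h) (by decide)
  have hyz : c 1 ≠ c 2 := fun h => absurd (hc h) (by decide)
  rw [Matrix.det_fin_three]
  simp only [Matrix.submatrix_apply, id]
  rcases hc0 : c 0 with i0 | b0 <;> rcases hc1 : c 1 with i1 | b1 <;>
    rcases hc2 : c 2 with i2 | b2 <;>
    simp only [hc0, hc1, hc2] at hxy hxz hyz <;>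
    simp only [Matrix.fromCols_apply_inl, Matrix.fromCols_apply_inr,
      Matrix.of_apply, Matrix.one_apply, ne_eq, Sum.inr.injEq, Sum.inl.injEq,
      Fin.val_zero, Fin.val_one, Fin.val_two, zero_mul, one_mul, pow_zero,
      pow_mul'] at hxy hxz hyz ⊢
  case inr.inr.inr =>
    have h01 := sub_ne_zero_of_ne (hinj b1 b0 (Ne.symm hxy))
    have h02 := sub_ne_zero_of_ne (hinj b2 b0 (Ne.symm hxz))
    have h12 := sub_ne_zero_of_ne (hinj b2 b1 (Ne.symm hyz))
    intro H
    exact (mul_ne_zero (mul_ne_zero h01 h02) h12) (by linear_combination H)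
  case inl.inr.inr =>
    have h12 := sub_ne_zero_of_ne (hinj b2 b1 (Ne.symm hyz))
    fin_cases i0 <;> norm_num [Fin.ext_iff]
    · intro H
      have : ω^(b1:ℕ) * ω^(b2:ℕ) * (ω^(b2:ℕ) - ω^(b1:ℕ)) = 0 := by linear_combination H
      exact (mul_ne_zero (mul_ne_zero (pow_ne_zero _ hω0) (pow_ne_zero _ hω0)) h12) this
    · intro H
      have : (ω^(b2:ℕ) - ω^(b1:ℕ))^2 = 0 := by
        linear_combination -H + ((ω^(b1:ℕ))^2 - ω^(b1:ℕ)*ω^(b2:ℕ))*h2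
      exact (pow_ne_zero 2 h12) this
    · exact sub_ne_zero_of_ne (hinj b2 b1 (Ne.symm hyz))
  case inr.inl.inr =>
    have h02 := sub_ne_zero_of_ne (hinj b0 b2 hxz)
    fin_cases i1 <;> norm_num [Fin.ext_iff]
    · intro H
      have : ω^(b0:ℕ) * ω^(b2:ℕ) * (ω^(b0:ℕ) - ω^(b2:ℕ)) = 0 := by linear_combination H
      exact (mul_ne_zero (mul_ne_zero (pow_ne_zero _ hω0) (pow_ne_zero _ hω0)) h02) this
    · intro H
      have : (ω^(b0:ℕ) - ω^(b2:ℕ))^2 = 0 := by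
        linear_combination H + ((ω^(b0:ℕ))^2 - ω^(b0:ℕ)*ω^(b2:ℕ))*h2
      exact (pow_ne_zero 2 h02) this
    · intro H
      exact h02 (by linear_combination H)
  case inr.inr.inl =>
    have h01 := sub_ne_zero_of_ne (hinj b1 b0 (Ne.symm hxy))
    fin_cases i2 <;> norm_num [Fin.ext_iff]
    · intro H
      have : ω^(b0:ℕ) * ω^(b1:ℕ) * (ω^(b1:ℕ) - ω^(b0:ℕ)) = 0 := by linear_combination H
      exact (mul_ne_zero (mul_ne_zero (pow_ne_zero _ hω0) (pow_ne_zero _ hω0)) h01) this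
    · intro H
      have : (ω^(b1:ℕ) - ω^(b0:ℕ))^2 = 0 := by
        linear_combination -H + ((ω^(b0:ℕ))^2 - ω^(b0:ℕ)*ω^(b1:ℕ))*h2
      exact (pow_ne_zero 2 h01) this
    · exact h01
  case inl.inl.inr =>
    fin_cases i0 <;> fin_cases i1 <;> norm_num [Fin.ext_iff] at hxy <;> norm_num [Fin.ext_iff] <;>
      exact fun h => absurd h hω0
  case inl.inr.inl =>
    fin_cases i0 <;> fin_cases i2 <;> norm_num [Fin.ext_iff] at hxz <;> norm_num [Fin.ext_iff] <;>
      exact fun h => absurd h hω0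
  case inr.inl.inl =>
    fin_cases i1 <;> fin_cases i2 <;> norm_num [Fin.ext_iff] at hyz <;> norm_num [Fin.ext_iff] <;>
      exact fun h => absurd h hω0
  case inl.inl.inl =>
    fin_cases i0 <;> fin_cases i1 <;> fin_cases i2 <;>
      norm_num [Fin.ext_iff] at hxy <;> norm_num [Fin.ext_iff] at hxz <;>
      norm_num [Fin.ext_iff] at hyz <;> norm_num [Fin.ext_iff]
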